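/- Let G and H be finite graphs, each of which is a general corona of a tree, say G = T₁∘𝒫₁ and H = T₂∘𝒫₂ for trees T₁, T₂ and vertex neighborhood partitions 𝒫₁, 𝒫₂. If G and H share exactly one vertex, and this common vertex is an external vertex of both G and H, then the union G ∪ H is a general corona of a tree. -/

import Mathlib

open SimpleGraph

namespace GenCorona

universe u

/-- A vertex neighborhood partition of a graph `G`: for every vertex `v`, a partition
of the open neighborhood `N_G(v)` into nonempty sets. -/
structure NbhdPartition {V : Type u} (G : SimpleGraph V) where
  part : V → Set (Set V)
  nonempty : ∀ v : V, ∀ A ∈ part v, A.Nonempty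
  subset_nbhd : ∀ v : V, ∀ A ∈ part v, A ⊆ G.neighborSet v
  covers : ∀ v : V, ∀ u ∈ G.neighborSet v, ∃ A ∈ part v, u ∈ A
  eq_of_inter : ∀ v : V, ∀ A ∈ part v, ∀ B ∈ part v, (A ∩ B).Nonempty → A = B

variable {V : Type u}

/-- The vertex type of the general corona `G ∘ 𝒫`: external vertices `(v,1)` are encoded
as `Sum.inl v`, internal vertices `(v,A)` (with `A ∈ 𝒫(v)`) as `Sum.inr ⟨(v,A), _⟩`. -/
abbrev CoronaVert (G : SimpleGraph V) (P : NbhdPartition G) : Type u :=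
  V ⊕ {p : V × Set V // p.2 ∈ P.part p.1}

/-- The general corona `G ∘ 𝒫`. -/
def corona (G : SimpleGraph V) (P : NbhdPartition G) : SimpleGraph (CoronaVert G P) :=
  SimpleGraph.fromRel fun x y =>
    match x, y with
    | Sum.inl v, Sum.inr p => v = p.val.1
    | Sum.inr p, Sum.inr q =>
        G.Adj p.val.1 q.val.1 ∧ q.val.1 ∈ p.val.2 ∧ p.val.1 ∈ q.val.2
    | _, _ => False

/-- The set of external vertices of the general corona. -/
def Ext (G : SimpleGraph V) (P : NbhdPartition G) : Set (CoronaVert G P) :=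
  Set.range Sum.inl

/-- A graph is a general corona of a tree if it is isomorphic to `T ∘ 𝒫` for some finite
tree `T` and some vertex neighborhood partition `𝒫` of `T`. -/
def IsGeneralCoronaOfTree {W : Type*} (H : SimpleGraph W) : Prop :=
  ∃ (n : ℕ) (T : SimpleGraph (Fin n)) (P : NbhdPartition T),
    T.IsTree ∧ Nonempty (H ≃g corona T P)

/-- A graph `H` is a general corona of a tree with external vertex set `E`. -/
def IsGenCoronaWithExt {W : Type*} (H : SimpleGraph W) (E : Set W) : Prop :=
  ∃ (n : ℕ) (T : SimpleGraph (Fin n)) (P : NbhdPartition T),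
    T.IsTree ∧ ∃ f : H ≃g corona T P, E = ⇑f ⁻¹' Ext T P

/-- `D` is a dominating set of `G`. -/
def IsDominating (G : SimpleGraph V) (D : Set V) : Prop :=
  ∀ v ∉ D, ∃ u ∈ D, G.Adj v u

/-- `S` is a 2-packing of `G`: any two distinct vertices of `S` are at distance
greater than 2 (where the extended distance of unreachable vertices is `⊤`). -/
def Is2Packing (G : SimpleGraph V) (S : Set V) : Prop :=
  ∀ u ∈ S, ∀ v ∈ S, u ≠ v → 2 < G.edist u v

/-- A leaf is a vertex of degree 1, i.e. with exactly one neighbor. -/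
def IsLeaf (G : SimpleGraph V) (v : V) : Prop :=
  (G.neighborSet v).ncard = 1

/-- The domination number: the minimum size of a dominating set. -/
noncomputable def dominationNumber (G : SimpleGraph V) : ℕ :=
  sInf {n : ℕ | ∃ D : Set V, IsDominating G D ∧ D.ncard = n}

/-- The graph obtained from `G` by subdividing every edge in `F` (each once):
for each `e ∈ F` a new vertex `Sum.inr e` replaces the edge `e` by a path of length two. -/
def subdivide (G : SimpleGraph V) (F : Set (Sym2 V)) : SimpleGraph (V ⊕ F) :=
  SimpleGraph.fromRel fun x y =>
    match x, y with
    | Sum.inl u, Sum.inl v => G.Adj u v ∧ s(u, v) ∉ F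
    | Sum.inl u, Sum.inr e => u ∈ e.val
    | _, _ => False

/-- The domination subdivision number `sd(G)`: the minimum number of edges which must be
subdivided (each edge at most once) in order to increase the domination number. -/
noncomputable def sd (G : SimpleGraph V) : ℕ :=
  sInf {k : ℕ | ∃ F : Set (Sym2 V), F ⊆ G.edgeSet ∧ F.ncard = k ∧
    dominationNumber G < dominationNumber (subdivide G F)}

/-- The corona `G ∘ K₁`: attach one new pendant vertex `Sum.inr v` to each vertex
`Sum.inl v` of `G`. -/
def coronaK1 (G : SimpleGraph V) : SimpleGraph (V ⊕ V) :=
  SimpleGraph.fromRel fun x y =>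
    match x, y with
    | Sum.inl u, Sum.inl w => G.Adj u w
    | Sum.inl u, Sum.inr w => u = w
    | _, _ => False

/-- The 2-subdivision `S₂(G)`: every edge `uv` is replaced by a path `(u, x₁, x₂, v)`;
the new vertex `Sum.inr ⟨(u,v), _⟩` is the subdivision vertex adjacent to `u`. -/
def twoSubdivision (G : SimpleGraph V) : SimpleGraph (V ⊕ {p : V × V // G.Adj p.1 p.2}) :=
  SimpleGraph.fromRel fun x y =>
    match x, y with
    | Sum.inl u, Sum.inr p => u = p.val.1
    | Sum.inr p, Sum.inr q => p.val.1 = q.val.2 ∧ p.val.2 = q.val.1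
    | _, _ => False

/-- `𝒫'` is a refinement of `𝒫`. -/
def Refines {G : SimpleGraph V} (P' P : NbhdPartition G) : Prop :=
  ∀ v : V, ∀ A ∈ P'.part v, ∃ B ∈ P.part v, A ⊆ B

/-- The graph obtained by contracting the two vertices `x` and `y` of `G` to the single
vertex `x` (the vertex `y` is removed, and `x` becomes adjacent to all former
neighbors of `y`). -/
def contractPair {W : Type*} (G : SimpleGraph W) (x y : W) :
    SimpleGraph {w : W // w ≠ y} :=
  SimpleGraph.fromRel fun a b =>
    G.Adj a.val b.val ∨ (a.val = x ∧ G.Adj y b.val) ∨ (b.val = x ∧ G.Adj a.val y)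

/-- The graph obtained from `G` by attaching a path `(x, y, z)` (encoded as
`Sum.inr 0, Sum.inr 1, Sum.inr 2`) to the vertex `v` via the edge `v x`. -/
def attachPath3 {W : Type*} (G : SimpleGraph W) (v : W) : SimpleGraph (W ⊕ Fin 3) :=
  SimpleGraph.fromRel fun a b =>
    match a, b with
    | Sum.inl u, Sum.inl w => G.Adj u w
    | Sum.inl u, Sum.inr i => u = v ∧ i = 0
    | Sum.inr i, Sum.inr j => (i = 0 ∧ j = 1) ∨ (i = 1 ∧ j = 2)
    | _, _ => False

/-- The graph obtained from `G` by attaching a path `(x, y)` (encoded as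
`Sum.inr 0, Sum.inr 1`) to the vertex `v` via the edge `v x`. -/
def attachPath2 {W : Type*} (G : SimpleGraph W) (v : W) : SimpleGraph (W ⊕ Fin 2) :=
  SimpleGraph.fromRel fun a b =>
    match a, b with
    | Sum.inl u, Sum.inl w => G.Adj u w
    | Sum.inl u, Sum.inr i => u = v ∧ i = 0
    | Sum.inr i, Sum.inr j => i = 0 ∧ j = 1
    | _, _ => False

/-- The family `𝓕` of labeled trees; the label of a vertex is `A` when it belongs to the
distinguished set `L`, and `B` otherwise.  The family contains the labeled path `P₄`
(leaves labeled `A`, support vertices labeled `B`) and is closed under the two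
attachment operations. -/
inductive LabF : ∀ {W : Type}, SimpleGraph W → Set W → Prop where
  | base : LabF (SimpleGraph.pathGraph 4) ({0, 3} : Set (Fin 4))
  | opA {W : Type} {G : SimpleGraph W} {L : Set W} (v : W) :
      LabF G L → v ∈ L →
        LabF (attachPath3 G v) (Sum.inl '' L ∪ {Sum.inr (2 : Fin 3)})
  | opB {W : Type} {G : SimpleGraph W} {L : Set W} (v : W) :
      LabF G L → v ∉ L →
        LabF (attachPath2 G v) (Sum.inl '' L ∪ {Sum.inr (1 : Fin 2)})

/-- A tree `T` belongs to the family `𝓕` if it admits a labeling constructed by the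
above rules, i.e. it is isomorphic to a member of the inductively generated family. -/
def MemF {W : Type*} (T : SimpleGraph W) : Prop :=
  ∃ (W' : Type) (G : SimpleGraph W') (L : Set W'), LabF G L ∧ Nonempty (T ≃g G)

/-! ### Auxiliary material for Statement 7 -/

section CoronaAdj

variable {G : SimpleGraph V} {P : NbhdPartition G}

lemma corona_adj_inl_inl {v w : V} : ¬ (corona G P).Adj (Sum.inl v) (Sum.inl w) := by
  simp [corona, fromRel_adj]

lemma corona_adj_inl_inr {v : V} {p : {p : V × Set V // p.2 ∈ P.part p.1}} :
    (corona G P).Adj (Sum.inl v) (Sum.inr p) ↔ v = p.val.1 := by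
  simp [corona, fromRel_adj]

lemma corona_adj_inr_inl {v : V} {p : {p : V × Set V // p.2 ∈ P.part p.1}} :
    (corona G P).Adj (Sum.inr p) (Sum.inl v) ↔ v = p.val.1 := by
  simp [corona, fromRel_adj]

lemma corona_adj_inr_inr {p q : {p : V × Set V // p.2 ∈ P.part p.1}} :
    (corona G P).Adj (Sum.inr p) (Sum.inr q) ↔
      G.Adj p.val.1 q.val.1 ∧ q.val.1 ∈ p.val.2 ∧ p.val.1 ∈ q.val.2 := by
  simp only [corona, fromRel_adj, ne_eq, Sum.inr.injEq]
  constructor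
  · rintro ⟨hne, ⟨h1, h2, h3⟩ | ⟨h1, h2, h3⟩⟩
    · exact ⟨h1, h2, h3⟩
    · exact ⟨h1.symm, h3, h2⟩
  · rintro ⟨h1, h2, h3⟩
    refine ⟨fun hpq => ?_, Or.inl ⟨h1, h2, h3⟩⟩
    rw [hpq] at h1
    exact G.loopless.irrefl _ h1

end CoronaAdj

section Transfer

lemma reachable_transfer {W₁ W₂ : Type*} {G : SimpleGraph W₁} {H : SimpleGraph W₂} (f : W₁ → W₂)
    (hf : ∀ a b, G.Adj a b → H.Adj (f a) (f b) ∨ f a = f b) {x y : W₁}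
    (h : G.Reachable x y) : H.Reachable (f x) (f y) := by
  obtain ⟨p⟩ := h
  induction p with
  | nil => exact Reachable.refl _
  | @cons a b c h' p ih =>
      rcases hf _ _ h' with h2 | h2
      · exact (h2.reachable).trans ih
      · rw [h2]; exact ih

lemma isTree_map {A : Type*} {B : Type*} {G : SimpleGraph A} {H : SimpleGraph B}
    (φ : G ≃g H) (h : G.IsTree) : H.IsTree := by
  constructor
  · exact φ.connected_iff.mp h.isConnected
  · intro v c hc
    have hinj : Function.Injective ⇑φ.symm.toHom := fun a b hab => φ.symm.injective hab
    exact h.IsAcyclic (c.map φ.symm.toHom) (hc.map hinj)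

/-- Transport of a neighborhood partition along a graph isomorphism. -/
def NbhdPartition.pmap {V' : Type*} {G : SimpleGraph V} {G' : SimpleGraph V'}
    (φ : G ≃g G') (P : NbhdPartition G) : NbhdPartition G' where
  part v' := (Set.image ⇑φ) '' P.part (φ.symm v')
  nonempty v' A' hA' := by
    obtain ⟨A, hA, rfl⟩ := hA'
    exact (P.nonempty _ A hA).image _
  subset_nbhd v' A' hA' := by
    obtain ⟨A, hA, rfl⟩ := hA'
    rintro _ ⟨a, ha, rfl⟩
    have h1 : G.Adj (φ.symm v') a := P.subset_nbhd _ A hA ha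
    have h2 : G'.Adj (φ (φ.symm v')) (φ a) := φ.map_adj_iff.mpr h1
    simpa using h2
  covers v' u hu := by
    have h1 : G.Adj (φ.symm v') (φ.symm u) := φ.symm.map_adj_iff.mpr hu
    obtain ⟨A, hA, haA⟩ := P.covers _ _ h1
    exact ⟨⇑φ '' A, ⟨A, hA, rfl⟩, ⟨φ.symm u, haA, by simp⟩⟩
  eq_of_inter v' A' hA' B' hB' hne := by
    obtain ⟨A, hA, rfl⟩ := hA'
    obtain ⟨B, hB, rfl⟩ := hB'
    rw [← Set.image_inter φ.injective, Set.image_nonempty] at hne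
    rw [P.eq_of_inter _ A hA B hB hne]

/-- Transport of the general corona along a graph isomorphism. -/
def coronaCongr {V' : Type*} {G : SimpleGraph V} {G' : SimpleGraph V'}
    (φ : G ≃g G') (P : NbhdPartition G) : corona G P ≃g corona G' (P.pmap φ) where
  toFun x := match x with
    | Sum.inl v => Sum.inl (φ v)
    | Sum.inr ⟨(v, A), h⟩ => Sum.inr ⟨(φ v, ⇑φ '' A), ⟨A, by simpa using h, rfl⟩⟩
  invFun x := match x with
    | Sum.inl v => Sum.inl (φ.symm v)
    | Sum.inr ⟨(v, A), h⟩ => Sum.inr ⟨(φ.symm v, ⇑φ.symm '' A), by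
        obtain ⟨B, hB, rfl⟩ := h
        simpa [Set.image_image] using hB⟩
  left_inv x := by
    rcases x with v | ⟨⟨v, A⟩, h⟩ <;> simp [Set.image_image]
  right_inv x := by
    rcases x with v | ⟨⟨v, A⟩, h⟩ <;> simp [Set.image_image]
  map_rel_iff' := by
    rintro (v | ⟨⟨v, A⟩, hA⟩) (w | ⟨⟨w, B⟩, hB⟩) <;>
      simp [corona_adj_inl_inl, corona_adj_inl_inr, corona_adj_inr_inl, corona_adj_inr_inr,
        φ.map_adj_iff, φ.injective.mem_set_image, φ.injective.eq_iff]

end Transfer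

section Glue

variable {V₁ V₂ : Type u} (T₁ : SimpleGraph V₁) (T₂ : SimpleGraph V₂) (v₁ : V₁) (v₂ : V₂)

/-- The vertex type of the one-point gluing of two graphs. -/
abbrev GlueV (V₁ : Type u) {V₂ : Type u} (v₂ : V₂) : Type u := V₁ ⊕ {j : V₂ // j ≠ v₂}

open Classical in
/-- Inclusion of the second vertex type into the glued vertex type. -/
noncomputable def gι (v₁ : V₁) (v₂ : V₂) (j : V₂) : GlueV V₁ v₂ :=
  if h : j = v₂ then Sum.inl v₁ else Sum.inr ⟨j, h⟩

lemma gι_v₂ : gι v₁ v₂ v₂ = Sum.inl v₁ := by simp [gι]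

lemma gι_ne {j : V₂} (h : j ≠ v₂) : gι v₁ v₂ j = Sum.inr ⟨j, h⟩ := by simp [gι, h]

lemma gι_inj : Function.Injective (gι v₁ v₂ : V₂ → GlueV V₁ v₂) := by
  intro a b hab
  by_cases ha : a = v₂ <;> by_cases hb : b = v₂
  · rw [ha, hb]
  · rw [ha, gι_v₂, gι_ne _ _ hb] at hab; exact absurd hab (by simp)
  · rw [hb, gι_v₂, gι_ne _ _ ha] at hab; exact absurd hab (by simp)
  · rw [gι_ne _ _ ha, gι_ne _ _ hb] at hab
    simpa using congrArg Subtype.val (Sum.inr_injective hab)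

lemma mem_range_gι_iff {x : GlueV V₁ v₂} :
    x ∈ Set.range (gι v₁ v₂) ↔ x = Sum.inl v₁ ∨ ∃ j, x = Sum.inr j := by
  constructor
  · rintro ⟨j, rfl⟩
    by_cases hj : j = v₂
    · subst hj; rw [gι_v₂]; exact Or.inl rfl
    · rw [gι_ne _ _ hj]; exact Or.inr ⟨_, rfl⟩
  · rintro (rfl | ⟨j, rfl⟩)
    · exact ⟨v₂, gι_v₂ _ _⟩
    · exact ⟨j.val, gι_ne _ _ j.prop⟩

/-- The one-point gluing of two graphs at `v₁` resp. `v₂`. -/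
def glue : SimpleGraph (GlueV V₁ v₂) :=
  SimpleGraph.fromRel fun x y =>
    match x, y with
    | Sum.inl i, Sum.inl i' => T₁.Adj i i'
    | Sum.inr j, Sum.inr j' => T₂.Adj j.val j'.val
    | Sum.inl i, Sum.inr j => i = v₁ ∧ T₂.Adj v₂ j.val
    | _, _ => False

variable {T₁ T₂ v₁ v₂}

lemma glue_adj_inl_inl {i i' : V₁} :
    (glue T₁ T₂ v₁ v₂).Adj (Sum.inl i) (Sum.inl i') ↔ T₁.Adj i i' := by
  simp only [glue, fromRel_adj, ne_eq, Sum.inl.injEq]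
  constructor
  · rintro ⟨hne, h | h⟩
    · exact h
    · exact h.symm
  · exact fun h => ⟨h.ne, Or.inl h⟩

lemma glue_adj_inl_inr {i : V₁} {j : {j : V₂ // j ≠ v₂}} :
    (glue T₁ T₂ v₁ v₂).Adj (Sum.inl i) (Sum.inr j) ↔ i = v₁ ∧ T₂.Adj v₂ j.val := by
  simp [glue, fromRel_adj]

lemma glue_adj_inr_inl {i : V₁} {j : {j : V₂ // j ≠ v₂}} :
    (glue T₁ T₂ v₁ v₂).Adj (Sum.inr j) (Sum.inl i) ↔ i = v₁ ∧ T₂.Adj v₂ j.val := by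
  rw [adj_comm]; exact glue_adj_inl_inr

lemma glue_adj_inr_inr {j j' : {j : V₂ // j ≠ v₂}} :
    (glue T₁ T₂ v₁ v₂).Adj (Sum.inr j) (Sum.inr j') ↔ T₂.Adj j.val j'.val := by
  simp only [glue, fromRel_adj, ne_eq, Sum.inr.injEq]
  constructor
  · rintro ⟨hne, h | h⟩
    · exact h
    · exact h.symm
  · exact fun h => ⟨fun hj => h.ne (congrArg Subtype.val hj), Or.inl h⟩

lemma glue_adj_gι {j j' : V₂} :
    (glue T₁ T₂ v₁ v₂).Adj (gι v₁ v₂ j) (gι v₁ v₂ j') ↔ T₂.Adj j j' := by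
  by_cases hj : j = v₂ <;> by_cases hj' : j' = v₂
  · subst hj; subst hj'
    rw [gι_v₂, glue_adj_inl_inl]
    simp
  · subst hj
    rw [gι_v₂, gι_ne _ _ hj', glue_adj_inl_inr]
    simp
  · subst hj'
    rw [gι_v₂, gι_ne _ _ hj, glue_adj_inr_inl]
    rw [adj_comm]
    simp
  · rw [gι_ne _ _ hj, gι_ne _ _ hj', glue_adj_inr_inr]

lemma glue_connected (h₁ : T₁.Connected) (h₂ : T₂.Connected) :
    (glue T₁ T₂ v₁ v₂).Connected := by
  have key : ∀ x : GlueV V₁ v₂, (glue T₁ T₂ v₁ v₂).Reachable x (Sum.inl v₁) := by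
    rintro (i | j)
    · exact reachable_transfer (G := T₁) (H := glue T₁ T₂ v₁ v₂) Sum.inl
        (fun a b hab => Or.inl (glue_adj_inl_inl.mpr hab)) (h₁.preconnected i v₁)
    · have := reachable_transfer (G := T₂) (H := glue T₁ T₂ v₁ v₂) (gι v₁ v₂)
        (fun a b hab => Or.inl (glue_adj_gι.mpr hab)) (h₂.preconnected j.val v₂)
      rwa [gι_ne _ _ j.prop, gι_v₂] at this
  have : Nonempty (GlueV V₁ v₂) := ⟨Sum.inl v₁⟩
  exact Connected.mk fun x y => (key x).trans (key y).symm

/-- Projection to the first factor. -/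
def gπ₁ (v₁ : V₁) : GlueV V₁ v₂ → V₁ := Sum.elim id fun _ => v₁

/-- Projection to the second factor. -/
def gπ₂ (v₂ : V₂) : GlueV V₁ v₂ → V₂ := Sum.elim (fun _ => v₂) Subtype.val

lemma gπ₂_gι {j : V₂} : gπ₂ v₂ (gι v₁ v₂ j : GlueV V₁ v₂) = j := by
  by_cases hj : j = v₂
  · subst hj; rw [gι_v₂]; rfl
  · rw [gι_ne _ _ hj]; rfl

lemma glue_acyclic (ht₁ : T₁.IsAcyclic) (ht₂ : T₂.IsAcyclic) :
    (glue T₁ T₂ v₁ v₂).IsAcyclic := by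
  rw [isAcyclic_iff_forall_adj_isBridge]
  have bridge₂ : ∀ j j' : V₂, (glue T₁ T₂ v₁ v₂).Adj (gι v₁ v₂ j) (gι v₁ v₂ j') →
      (glue T₁ T₂ v₁ v₂).IsBridge s(gι v₁ v₂ j, gι v₁ v₂ j') := by
    intro j j' hadj
    have hjj' : T₂.Adj j j' := glue_adj_gι.mp hadj
    rw [isBridge_iff]
    refine fun hreach => ?_
    have hbr : ¬ (T₂ \ fromEdgeSet {s(j, j')}).Reachable j j' :=
      ((isBridge_iff).mp ((isAcyclic_iff_forall_adj_isBridge.mp ht₂) hjj'))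
    apply hbr
    have := reachable_transfer (G := (glue T₁ T₂ v₁ v₂) \ fromEdgeSet {s(gι v₁ v₂ j, gι v₁ v₂ j')})
      (H := T₂ \ fromEdgeSet {s(j, j')}) (gπ₂ v₂) ?_ hreach
    · rwa [gπ₂_gι, gπ₂_gι] at this
    · rintro (a | a) (b | b) hab
      · exact Or.inr rfl
      · refine Or.inl ?_
        rw [sdiff_adj] at hab ⊢
        obtain ⟨hab1, hab2⟩ := hab
        obtain ⟨ha1, hab3⟩ := glue_adj_inl_inr.mp hab1
        refine ⟨hab3, ?_⟩
        simp only [fromEdgeSet_adj, Set.mem_singleton_iff] at hab2 ⊢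
        rintro ⟨he, hne⟩
        apply hab2
        refine ⟨?_, by simp⟩
        rw [ha1]
        have : Sym2.map (gι v₁ v₂) s(v₂, b.val) = Sym2.map (gι v₁ v₂) s(j, j') :=
          congrArg (Sym2.map (gι v₁ v₂)) he
        simpa [gπ₂, Sym2.map_pair_eq, gι_v₂, gι_ne _ _ b.prop] using this
      · refine Or.inl ?_
        rw [sdiff_adj] at hab ⊢
        obtain ⟨hab1, hab2⟩ := hab
        obtain ⟨hb1, hab3⟩ := glue_adj_inr_inl.mp hab1
        refine ⟨hab3.symm, ?_⟩
        simp only [fromEdgeSet_adj, Set.mem_singleton_iff] at hab2 ⊢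
        rintro ⟨he, hne⟩
        apply hab2
        refine ⟨?_, by simp⟩
        rw [hb1]
        have : Sym2.map (gι v₁ v₂) s(a.val, v₂) = Sym2.map (gι v₁ v₂) s(j, j') :=
          congrArg (Sym2.map (gι v₁ v₂)) he
        simpa [gπ₂, Sym2.map_pair_eq, gι_v₂, gι_ne _ _ a.prop] using this
      · refine Or.inl ?_
        rw [sdiff_adj] at hab ⊢
        obtain ⟨hab1, hab2⟩ := hab
        have hab3 := glue_adj_inr_inr.mp hab1
        refine ⟨hab3, ?_⟩
        simp only [fromEdgeSet_adj, Set.mem_singleton_iff] at hab2 ⊢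
        rintro ⟨he, hne⟩
        apply hab2
        refine ⟨?_, fun h => hne (congrArg (gπ₂ v₂) h)⟩
        have : Sym2.map (gι v₁ v₂) s(a.val, b.val) = Sym2.map (gι v₁ v₂) s(j, j') :=
          congrArg (Sym2.map (gι v₁ v₂)) he
        simpa [gπ₂, Sym2.map_pair_eq, gι_ne _ _ a.prop, gι_ne _ _ b.prop] using this
  rintro (i | j) (i' | j') hadj
  · -- both in the first factor
    have hii' : T₁.Adj i i' := glue_adj_inl_inl.mp hadj
    rw [isBridge_iff]
    refine fun hreach => ?_
    have hbr : ¬ (T₁ \ fromEdgeSet {s(i, i')}).Reachable i i' :=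
      ((isBridge_iff).mp ((isAcyclic_iff_forall_adj_isBridge.mp ht₁) hii'))
    apply hbr
    have := reachable_transfer (G := (glue T₁ T₂ v₁ v₂) \ fromEdgeSet {s(Sum.inl i, Sum.inl i')})
      (H := T₁ \ fromEdgeSet {s(i, i')}) (gπ₁ v₁) ?_ hreach
    · exact this
    · rintro (a | a) (b | b) hab
      · refine Or.inl ?_
        rw [sdiff_adj] at hab ⊢
        obtain ⟨hab1, hab2⟩ := hab
        refine ⟨glue_adj_inl_inl.mp hab1, ?_⟩
        simp only [fromEdgeSet_adj, Set.mem_singleton_iff] at hab2 ⊢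
        rintro ⟨he, hne⟩
        apply hab2
        refine ⟨?_, fun h => hne (congrArg (gπ₁ v₁) h)⟩
        have : Sym2.map (Sum.inl : V₁ → GlueV V₁ v₂) s(a, b)
            = Sym2.map (Sum.inl : V₁ → GlueV V₁ v₂) s(i, i') :=
          congrArg (Sym2.map _) he
        simpa [gπ₁, Sym2.map_pair_eq] using this
      · rw [sdiff_adj] at hab
        exact Or.inr (by simp [gπ₁, (glue_adj_inl_inr.mp hab.1).1])
      · rw [sdiff_adj] at hab
        exact Or.inr (by simp [gπ₁, (glue_adj_inr_inl.mp hab.1).1])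
      · exact Or.inr rfl
  · obtain ⟨hi, _⟩ := glue_adj_inl_inr.mp hadj
    have h1 : (Sum.inl i : GlueV V₁ v₂) = gι v₁ v₂ v₂ := by rw [hi, gι_v₂]
    have h2 : (Sum.inr j' : GlueV V₁ v₂) = gι v₁ v₂ j'.val := (gι_ne _ _ j'.prop).symm
    rw [h1, h2] at hadj ⊢
    exact bridge₂ _ _ hadj
  · obtain ⟨hi, _⟩ := glue_adj_inr_inl.mp hadj
    have h1 : (Sum.inl i' : GlueV V₁ v₂) = gι v₁ v₂ v₂ := by rw [hi, gι_v₂]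
    have h2 : (Sum.inr j : GlueV V₁ v₂) = gι v₁ v₂ j.val := (gι_ne _ _ j.prop).symm
    rw [h1, h2] at hadj ⊢
    exact bridge₂ _ _ hadj
  · have h1 : (Sum.inr j : GlueV V₁ v₂) = gι v₁ v₂ j.val := (gι_ne _ _ j.prop).symm
    have h2 : (Sum.inr j' : GlueV V₁ v₂) = gι v₁ v₂ j'.val := (gι_ne _ _ j'.prop).symm
    rw [h1, h2] at hadj ⊢
    exact bridge₂ _ _ hadj

lemma glue_isTree (h₁ : T₁.IsTree) (h₂ : T₂.IsTree) : (glue T₁ T₂ v₁ v₂).IsTree :=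
  ⟨glue_connected h₁.isConnected h₂.isConnected, glue_acyclic h₁.IsAcyclic h₂.IsAcyclic⟩

end Glue

section GluePart

variable {V₁ V₂ : Type u} (T₁ : SimpleGraph V₁) (T₂ : SimpleGraph V₂) (v₁ : V₁) (v₂ : V₂)
  (P₁ : NbhdPartition T₁) (P₂ : NbhdPartition T₂)

/-- The neighborhood partition on the one-point gluing. -/
def glueP : NbhdPartition (glue T₁ T₂ v₁ v₂) where
  part x :=
    match x with
    | Sum.inl i => (Set.image Sum.inl) '' P₁.part i ∪
        {S | i = v₁ ∧ S ∈ (Set.image (gι v₁ v₂)) '' P₂.part v₂}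
    | Sum.inr j => (Set.image (gι v₁ v₂)) '' P₂.part j.val
  nonempty x A hA := by
    rcases x with i | j
    · rcases hA with ⟨B, hB, rfl⟩ | ⟨hi, B, hB, rfl⟩
      · exact (P₁.nonempty _ _ hB).image _
      · exact (P₂.nonempty _ _ hB).image _
    · obtain ⟨B, hB, rfl⟩ := hA
      exact (P₂.nonempty _ _ hB).image _
  subset_nbhd x A hA := by
    rcases x with i | j
    · rcases hA with ⟨B, hB, rfl⟩ | ⟨hi, B, hB, rfl⟩
      · rintro _ ⟨a, ha, rfl⟩
        show (glue T₁ T₂ v₁ v₂).Adj (Sum.inl i) (Sum.inl a)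
        exact glue_adj_inl_inl.mpr (P₁.subset_nbhd i B hB ha)
      · rintro _ ⟨a, ha, rfl⟩
        show (glue T₁ T₂ v₁ v₂).Adj (Sum.inl i) (gι v₁ v₂ a)
        rw [hi, ← gι_v₂ v₁ v₂]
        exact glue_adj_gι.mpr (P₂.subset_nbhd v₂ B hB ha)
    · obtain ⟨B, hB, rfl⟩ := hA
      rintro _ ⟨a, ha, rfl⟩
      show (glue T₁ T₂ v₁ v₂).Adj (Sum.inr j) (gι v₁ v₂ a)
      rw [show (Sum.inr j : GlueV V₁ v₂) = gι v₁ v₂ j.val from (gι_ne _ _ j.prop).symm]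
      exact glue_adj_gι.mpr (P₂.subset_nbhd j.val B hB ha)
  covers x u hu := by
    rw [mem_neighborSet] at hu
    rcases x with i | j
    · rcases u with a | b
      · obtain ⟨B, hB, haB⟩ := P₁.covers i a (glue_adj_inl_inl.mp hu)
        exact ⟨Sum.inl '' B, Or.inl ⟨B, hB, rfl⟩, ⟨a, haB, rfl⟩⟩
      · obtain ⟨hi, hadj⟩ := glue_adj_inl_inr.mp hu
        obtain ⟨B, hB, hbB⟩ := P₂.covers v₂ b.val hadj
        exact ⟨gι v₁ v₂ '' B, Or.inr ⟨hi, B, hB, rfl⟩, ⟨b.val, hbB, gι_ne _ _ b.prop⟩⟩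
    · rcases u with a | b
      · obtain ⟨ha, hadj⟩ := glue_adj_inr_inl.mp hu
        obtain ⟨B, hB, hv₂B⟩ := P₂.covers j.val v₂ hadj.symm
        exact ⟨gι v₁ v₂ '' B, ⟨B, hB, rfl⟩, ⟨v₂, hv₂B, by rw [gι_v₂, ha]⟩⟩
      · obtain ⟨B, hB, hbB⟩ := P₂.covers j.val b.val (glue_adj_inr_inr.mp hu)
        exact ⟨gι v₁ v₂ '' B, ⟨B, hB, rfl⟩, ⟨b.val, hbB, gι_ne _ _ b.prop⟩⟩
  eq_of_inter x A hA B hB hne := by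
    rcases x with i | j
    · rcases hA with ⟨A', hA', rfl⟩ | ⟨hi, A', hA', rfl⟩ <;>
        rcases hB with ⟨B', hB', rfl⟩ | ⟨hi', B', hB', rfl⟩
      · rw [← Set.image_inter Sum.inl_injective, Set.image_nonempty] at hne
        rw [P₁.eq_of_inter i A' hA' B' hB' hne]
      · exfalso
        obtain ⟨z, ⟨a, _, rfl⟩, ⟨b, hbB', hz⟩⟩ := hne
        have hbv : b ≠ v₂ := (P₂.subset_nbhd v₂ B' hB' hbB').ne'
        rw [gι_ne _ _ hbv] at hz
        exact absurd hz (by simp)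
      · exfalso
        obtain ⟨z, ⟨b, hbA', hz⟩, ⟨a, _, rfl⟩⟩ := hne
        have hbv : b ≠ v₂ := (P₂.subset_nbhd v₂ A' hA' hbA').ne'
        rw [gι_ne _ _ hbv] at hz
        exact absurd hz (by simp)
      · rw [← Set.image_inter (gι_inj v₁ v₂), Set.image_nonempty] at hne
        rw [P₂.eq_of_inter v₂ A' hA' B' hB' hne]
    · obtain ⟨A', hA', rfl⟩ := hA
      obtain ⟨B', hB', rfl⟩ := hB
      rw [← Set.image_inter (gι_inj v₁ v₂), Set.image_nonempty] at hne
      rw [P₂.eq_of_inter j.val A' hA' B' hB' hne]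

variable {T₁ T₂ v₁ v₂ P₁ P₂}

lemma mem_glueP_inl {i : V₁} {A : Set V₁} (h : A ∈ P₁.part i) :
    Sum.inl '' A ∈ (glueP T₁ T₂ v₁ v₂ P₁ P₂).part (Sum.inl i) := by
  show Sum.inl '' A ∈ (Set.image Sum.inl) '' P₁.part i ∪
      {S | i = v₁ ∧ S ∈ (Set.image (gι v₁ v₂)) '' P₂.part v₂}
  exact Or.inl ⟨A, h, rfl⟩

lemma mem_glueP_gι {j : V₂} {A : Set V₂} (h : A ∈ P₂.part j) :
    gι v₁ v₂ '' A ∈ (glueP T₁ T₂ v₁ v₂ P₁ P₂).part (gι v₁ v₂ j) := by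
  by_cases hj : j = v₂
  · rw [hj] at h ⊢
    rw [gι_v₂]
    show gι v₁ v₂ '' A ∈ (Set.image Sum.inl) '' P₁.part v₁ ∪
        {S | v₁ = v₁ ∧ S ∈ (Set.image (gι v₁ v₂)) '' P₂.part v₂}
    exact Or.inr ⟨rfl, A, h, rfl⟩
  · rw [gι_ne _ _ hj]
    show gι v₁ v₂ '' A ∈ (Set.image (gι v₁ v₂)) '' P₂.part j
    exact ⟨A, h, rfl⟩

variable (T₁ T₂ v₁ v₂ P₁ P₂)

/-- Embedding of the first corona into the corona of the gluing. -/
noncomputable def ΦG :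
    CoronaVert T₁ P₁ → CoronaVert (glue T₁ T₂ v₁ v₂) (glueP T₁ T₂ v₁ v₂ P₁ P₂)
  | Sum.inl i => Sum.inl (Sum.inl i)
  | Sum.inr p => Sum.inr ⟨(Sum.inl p.val.1, Sum.inl '' p.val.2), mem_glueP_inl p.prop⟩

/-- Embedding of the second corona into the corona of the gluing. -/
noncomputable def ΦH :
    CoronaVert T₂ P₂ → CoronaVert (glue T₁ T₂ v₁ v₂) (glueP T₁ T₂ v₁ v₂ P₁ P₂)
  | Sum.inl j => Sum.inl (gι v₁ v₂ j)
  | Sum.inr p => Sum.inr ⟨(gι v₁ v₂ p.val.1, gι v₁ v₂ '' p.val.2), mem_glueP_gι p.prop⟩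

variable {T₁ T₂ v₁ v₂ P₁ P₂}

lemma ΦG_inj : Function.Injective (ΦG T₁ T₂ v₁ v₂ P₁ P₂) := by
  rintro (i | p) (i' | p') h
  · simp only [ΦG, Sum.inl.injEq] at h
    rw [h]
  · exact absurd h (by simp [ΦG])
  · exact absurd h (by simp [ΦG])
  · simp only [ΦG, Sum.inr.injEq, Subtype.mk.injEq, Prod.mk.injEq, Sum.inl.injEq] at h
    obtain ⟨h1, h2⟩ := h
    have h3 : p.val.2 = p'.val.2 := Set.image_injective.mpr Sum.inl_injective h2
    congr 1
    exact Subtype.ext (by rw [Prod.ext_iff]; exact ⟨h1, h3⟩)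

lemma ΦH_inj : Function.Injective (ΦH T₁ T₂ v₁ v₂ P₁ P₂) := by
  rintro (j | p) (j' | p') h
  · simp only [ΦH, Sum.inl.injEq] at h
    rw [gι_inj v₁ v₂ h]
  · exact absurd h (by simp [ΦH])
  · exact absurd h (by simp [ΦH])
  · simp only [ΦH, Sum.inr.injEq, Subtype.mk.injEq, Prod.mk.injEq] at h
    obtain ⟨h1, h2⟩ := h
    have h3 : p.val.2 = p'.val.2 := Set.image_injective.mpr (gι_inj v₁ v₂) h2
    congr 1
    exact Subtype.ext (by rw [Prod.ext_iff]; exact ⟨gι_inj v₁ v₂ h1, h3⟩)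

lemma ΦG_adj {x y : CoronaVert T₁ P₁} :
    (corona (glue T₁ T₂ v₁ v₂) (glueP T₁ T₂ v₁ v₂ P₁ P₂)).Adj
      (ΦG T₁ T₂ v₁ v₂ P₁ P₂ x) (ΦG T₁ T₂ v₁ v₂ P₁ P₂ y) ↔ (corona T₁ P₁).Adj x y := by
  rcases x with i | p <;> rcases y with i' | p'
  · simp [ΦG, corona_adj_inl_inl]
  · simp [ΦG, corona_adj_inl_inr]
  · simp [ΦG, corona_adj_inr_inl]
  · simp [ΦG, corona_adj_inr_inr, glue_adj_inl_inl, Sum.inl_injective.mem_set_image]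

lemma ΦH_adj {x y : CoronaVert T₂ P₂} :
    (corona (glue T₁ T₂ v₁ v₂) (glueP T₁ T₂ v₁ v₂ P₁ P₂)).Adj
      (ΦH T₁ T₂ v₁ v₂ P₁ P₂ x) (ΦH T₁ T₂ v₁ v₂ P₁ P₂ y) ↔ (corona T₂ P₂).Adj x y := by
  rcases x with j | p <;> rcases y with j' | p'
  · simp [ΦH, corona_adj_inl_inl]
  · simp [ΦH, corona_adj_inl_inr, (gι_inj v₁ v₂).eq_iff]
  · simp [ΦH, corona_adj_inr_inl, (gι_inj v₁ v₂).eq_iff]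
  · simp [ΦH, corona_adj_inr_inr, glue_adj_gι, (gι_inj v₁ v₂).mem_set_image]

lemma ΦG_eq_ΦH {x : CoronaVert T₁ P₁} {y : CoronaVert T₂ P₂}
    (h : ΦG T₁ T₂ v₁ v₂ P₁ P₂ x = ΦH T₁ T₂ v₁ v₂ P₁ P₂ y) :
    x = Sum.inl v₁ ∧ y = Sum.inl v₂ := by
  rcases x with i | p <;> rcases y with j | q
  · simp only [ΦG, ΦH, Sum.inl.injEq] at h
    by_cases hj : j = v₂
    · rw [hj, gι_v₂] at h
      simp only [Sum.inl.injEq] at h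
      exact ⟨by rw [h], by rw [hj]⟩
    · rw [gι_ne _ _ hj] at h
      exact absurd h (by simp)
  · exact absurd h (by simp [ΦG, ΦH])
  · exact absurd h (by simp [ΦG, ΦH])
  · exfalso
    simp only [ΦG, ΦH, Sum.inr.injEq, Subtype.mk.injEq, Prod.mk.injEq] at h
    obtain ⟨h1, h2⟩ := h
    by_cases hq : q.val.1 = v₂
    · have hsub : q.val.2 ⊆ T₂.neighborSet q.val.1 := P₂.subset_nbhd _ _ q.prop
      obtain ⟨b, hb⟩ := P₂.nonempty _ _ q.prop
      have hbv : b ≠ v₂ := by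
        rw [hq] at hsub
        exact (hsub hb).ne'
      have hmem : gι v₁ v₂ b ∈ Sum.inl '' p.val.2 := by
        rw [h2]; exact ⟨b, hb, rfl⟩
      rw [gι_ne _ _ hbv] at hmem
      obtain ⟨a, _, ha⟩ := hmem
      exact absurd ha (by simp)
    · rw [gι_ne _ _ hq] at h1
      exact absurd h1 (by simp)

lemma ΦG_ΦH_adj {x : CoronaVert T₁ P₁} {y : CoronaVert T₂ P₂}
    (h : (corona (glue T₁ T₂ v₁ v₂) (glueP T₁ T₂ v₁ v₂ P₁ P₂)).Adj
      (ΦG T₁ T₂ v₁ v₂ P₁ P₂ x) (ΦH T₁ T₂ v₁ v₂ P₁ P₂ y)) :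
    x = Sum.inl v₁ ∨ y = Sum.inl v₂ := by
  rcases x with i | p <;> rcases y with j | q
  · exact absurd h corona_adj_inl_inl
  · simp only [ΦG, ΦH] at h
    rw [corona_adj_inl_inr] at h
    have h' : Sum.inl i = gι v₁ v₂ q.val.1 := h
    by_cases hq : q.val.1 = v₂
    · left
      rw [hq, gι_v₂] at h'
      simp only [Sum.inl.injEq] at h'
      rw [h']
    · rw [gι_ne _ _ hq] at h'
      exact absurd h' (by simp)
  · simp only [ΦG, ΦH] at h
    rw [corona_adj_inr_inl] at h
    have h' : gι v₁ v₂ j = Sum.inl p.val.1 := h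
    by_cases hj : j = v₂
    · right
      rw [hj]
    · rw [gι_ne _ _ hj] at h'
      exact absurd h' (by simp)
  · exfalso
    simp only [ΦG, ΦH] at h
    rw [corona_adj_inr_inr] at h
    obtain ⟨hadj, h2, h3⟩ := h
    obtain ⟨a, ha, hga⟩ := h2
    have hga' : Sum.inl a = gι v₁ v₂ q.val.1 := hga
    by_cases hq : q.val.1 = v₂
    · obtain ⟨b, hb, hgb⟩ := h3
      have hgb' : gι v₁ v₂ b = Sum.inl p.val.1 := hgb
      by_cases hb2 : b = v₂
      · have hsub : q.val.2 ⊆ T₂.neighborSet q.val.1 := P₂.subset_nbhd _ _ q.prop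
        rw [hq] at hsub
        have := hsub hb
        rw [hb2] at this
        exact T₂.loopless.irrefl v₂ this
      · rw [gι_ne _ _ hb2] at hgb'
        exact absurd hgb' (by simp)
    · rw [gι_ne _ _ hq] at hga'
      exact absurd hga' (by simp)

lemma ΦG_ΦH_surj (z : CoronaVert (glue T₁ T₂ v₁ v₂) (glueP T₁ T₂ v₁ v₂ P₁ P₂)) :
    (∃ x, ΦG T₁ T₂ v₁ v₂ P₁ P₂ x = z) ∨ (∃ y, ΦH T₁ T₂ v₁ v₂ P₁ P₂ y = z) := by
  rcases z with (i | j) | ⟨⟨x, S⟩, hS⟩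
  · exact Or.inl ⟨Sum.inl i, rfl⟩
  · refine Or.inr ⟨Sum.inl j.val, ?_⟩
    show Sum.inl (gι v₁ v₂ j.val) = Sum.inl (Sum.inr j)
    rw [gι_ne _ _ j.prop]
  · rcases x with i | j
    · rcases hS with ⟨A, hA, hAS⟩ | ⟨hi, A, hA, hAS⟩
      · refine Or.inl ⟨Sum.inr ⟨(i, A), hA⟩, ?_⟩
        simp only [ΦG]
        congr 1
        exact Subtype.ext (by rw [Prod.ext_iff]; exact ⟨rfl, hAS⟩)
      · refine Or.inr ⟨Sum.inr ⟨(v₂, A), hA⟩, ?_⟩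
        simp only [ΦH]
        congr 1
        exact Subtype.ext (by rw [Prod.ext_iff]; exact ⟨show gι v₁ v₂ v₂ = Sum.inl i by rw [gι_v₂, hi], hAS⟩)
    · obtain ⟨A, hA, hAS⟩ := hS
      refine Or.inr ⟨Sum.inr ⟨(j.val, A), hA⟩, ?_⟩
      simp only [ΦH]
      congr 1
      exact Subtype.ext (by rw [Prod.ext_iff]; exact ⟨show gι v₁ v₂ j.val = Sum.inr j by rw [gι_ne _ _ j.prop], hAS⟩)

end GluePart

/-- If the graphs `G = U.induce SG` and `H = U.induce SH` are general coronas
of trees, they share exactly one vertex `w0` (and every edge of the union `U` lies in `G`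
or in `H`), and `w0` is an external vertex of both, then the union `U = G ∪ H` is a
general corona of a tree. -/
theorem union_at_external_vertex {W : Type} [Fintype W]
    (U : SimpleGraph W) (SG SH : Set W) (w0 : W)
    (hw0G : w0 ∈ SG) (hw0H : w0 ∈ SH)
    (hcover : SG ∪ SH = Set.univ) (hinter : SG ∩ SH = {w0})
    (hedges : ∀ a b : W, U.Adj a b → (a ∈ SG ∧ b ∈ SG) ∨ (a ∈ SH ∧ b ∈ SH))
    (EG : Set ↥SG) (EH : Set ↥SH)
    (hG : IsGenCoronaWithExt (U.induce SG) EG)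
    (hH : IsGenCoronaWithExt (U.induce SH) EH)
    (hmemG : (⟨w0, hw0G⟩ : ↥SG) ∈ EG) (hmemH : (⟨w0, hw0H⟩ : ↥SH) ∈ EH) :
    IsGeneralCoronaOfTree U := by
  classical
  obtain ⟨n₁, T₁, P₁, hT₁, f, hEG⟩ := hG
  obtain ⟨n₂, T₂, P₂, hT₂, g, hEH⟩ := hH
  have hfw0 : f ⟨w0, hw0G⟩ ∈ Ext T₁ P₁ := by rw [hEG] at hmemG; exact hmemG
  have hgw0 : g ⟨w0, hw0H⟩ ∈ Ext T₂ P₂ := by rw [hEH] at hmemH; exact hmemH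
  obtain ⟨v₁, hv₁⟩ := hfw0
  obtain ⟨v₂, hv₂⟩ := hgw0
  have hmem : ∀ w : W, w ∈ SG ∨ w ∈ SH := by
    intro w
    have hw : w ∈ SG ∪ SH := by rw [hcover]; trivial
    exact hw
  have hw0' : ∀ w, w ∈ SG → w ∈ SH → w = w0 := by
    intro w h1 h2
    have hw : w ∈ SG ∩ SH := ⟨h1, h2⟩
    rw [hinter] at hw
    exact hw
  let φ : W → CoronaVert (glue T₁ T₂ v₁ v₂) (glueP T₁ T₂ v₁ v₂ P₁ P₂) := fun w =>
    if h : w ∈ SG then ΦG T₁ T₂ v₁ v₂ P₁ P₂ (f ⟨w, h⟩)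
    else ΦH T₁ T₂ v₁ v₂ P₁ P₂ (g ⟨w, (hmem w).resolve_left h⟩)
  have hφG : ∀ w (hw : w ∈ SG), φ w = ΦG T₁ T₂ v₁ v₂ P₁ P₂ (f ⟨w, hw⟩) :=
    fun w hw => dif_pos hw
  have hφH : ∀ w (hw : w ∈ SH), φ w = ΦH T₁ T₂ v₁ v₂ P₁ P₂ (g ⟨w, hw⟩) := by
    intro w hw
    by_cases hwG : w ∈ SG
    · have hww0 : w = w0 := hw0' w hwG hw
      subst hww0
      rw [hφG w hwG]
      have h1 : f ⟨w, hwG⟩ = Sum.inl v₁ := hv₁.symm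
      have h2 : g ⟨w, hw⟩ = Sum.inl v₂ := hv₂.symm
      rw [h1, h2]
      simp only [ΦG, ΦH, gι_v₂]
    · exact dif_neg hwG
  have hφinj : Function.Injective φ := by
    intro a b hab
    by_cases ha : a ∈ SG <;> by_cases hb : b ∈ SG
    · rw [hφG a ha, hφG b hb] at hab
      exact congrArg Subtype.val (f.injective (ΦG_inj hab))
    · have hbH : b ∈ SH := (hmem b).resolve_left hb
      rw [hφG a ha, hφH b hbH] at hab
      obtain ⟨h1, h2⟩ := ΦG_eq_ΦH hab
      exfalso
      apply hb
      have hgb : g ⟨b, hbH⟩ = g ⟨w0, hw0H⟩ := by rw [h2, hv₂]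
      have hb0 : b = w0 := congrArg Subtype.val (g.injective hgb)
      rw [hb0]; exact hw0G
    · have haH : a ∈ SH := (hmem a).resolve_left ha
      rw [hφH a haH, hφG b hb] at hab
      obtain ⟨h1, h2⟩ := ΦG_eq_ΦH hab.symm
      exfalso
      apply ha
      have hga : g ⟨a, haH⟩ = g ⟨w0, hw0H⟩ := by rw [h2, hv₂]
      have ha0 : a = w0 := congrArg Subtype.val (g.injective hga)
      rw [ha0]; exact hw0G
    · have haH : a ∈ SH := (hmem a).resolve_left ha
      have hbH : b ∈ SH := (hmem b).resolve_left hb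
      rw [hφH a haH, hφH b hbH] at hab
      exact congrArg Subtype.val (g.injective (ΦH_inj hab))
  have hφsurj : Function.Surjective φ := by
    intro z
    rcases ΦG_ΦH_surj z with ⟨x, rfl⟩ | ⟨y, rfl⟩
    · refine ⟨(f.symm x).val, ?_⟩
      rw [hφG _ (f.symm x).prop]
      exact congrArg _ (f.apply_symm_apply x)
    · refine ⟨(g.symm y).val, ?_⟩
      rw [hφH _ (g.symm y).prop]
      exact congrArg _ (g.apply_symm_apply y)
  have hmap : ∀ a b : W,
      (corona (glue T₁ T₂ v₁ v₂) (glueP T₁ T₂ v₁ v₂ P₁ P₂)).Adj (φ a) (φ b) ↔ U.Adj a b := by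
    intro a b
    constructor
    · intro hA
      by_cases ha : a ∈ SG <;> by_cases hb : b ∈ SG
      · rw [hφG a ha, hφG b hb] at hA
        exact (f.map_rel_iff.mp (ΦG_adj.mp hA) : (U.induce SG).Adj ⟨a, ha⟩ ⟨b, hb⟩)
      · have hbH : b ∈ SH := (hmem b).resolve_left hb
        by_cases haH : a ∈ SH
        · rw [hφH a haH, hφH b hbH] at hA
          exact (g.map_rel_iff.mp (ΦH_adj.mp hA) : (U.induce SH).Adj ⟨a, haH⟩ ⟨b, hbH⟩)
        · rw [hφG a ha, hφH b hbH] at hA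
          rcases ΦG_ΦH_adj hA with h1 | h2
          · exfalso
            apply haH
            have hfa : f ⟨a, ha⟩ = f ⟨w0, hw0G⟩ := by rw [h1, hv₁]
            have ha0 : a = w0 := congrArg Subtype.val (f.injective hfa)
            rw [ha0]; exact hw0H
          · exfalso
            apply hb
            have hgb : g ⟨b, hbH⟩ = g ⟨w0, hw0H⟩ := by rw [h2, hv₂]
            have hb0 : b = w0 := congrArg Subtype.val (g.injective hgb)
            rw [hb0]; exact hw0G
      · have haH : a ∈ SH := (hmem a).resolve_left ha
        by_cases hbH : b ∈ SH
        · rw [hφH a haH, hφH b hbH] at hA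
          exact (g.map_rel_iff.mp (ΦH_adj.mp hA) : (U.induce SH).Adj ⟨a, haH⟩ ⟨b, hbH⟩)
        · rw [hφH a haH, hφG b hb] at hA
          rcases ΦG_ΦH_adj hA.symm with h1 | h2
          · exfalso
            apply hbH
            have hfb : f ⟨b, hb⟩ = f ⟨w0, hw0G⟩ := by rw [h1, hv₁]
            have hb0 : b = w0 := congrArg Subtype.val (f.injective hfb)
            rw [hb0]; exact hw0H
          · exfalso
            apply ha
            have hga : g ⟨a, haH⟩ = g ⟨w0, hw0H⟩ := by rw [h2, hv₂]
            have ha0 : a = w0 := congrArg Subtype.val (g.injective hga)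
            rw [ha0]; exact hw0G
      · have haH : a ∈ SH := (hmem a).resolve_left ha
        have hbH : b ∈ SH := (hmem b).resolve_left hb
        rw [hφH a haH, hφH b hbH] at hA
        exact (g.map_rel_iff.mp (ΦH_adj.mp hA) : (U.induce SH).Adj ⟨a, haH⟩ ⟨b, hbH⟩)
    · intro hU
      rcases hedges a b hU with ⟨ha, hb⟩ | ⟨ha, hb⟩
      · rw [hφG a ha, hφG b hb]
        exact ΦG_adj.mpr (f.map_rel_iff.mpr (hU : (U.induce SG).Adj ⟨a, ha⟩ ⟨b, hb⟩))
      · rw [hφH a ha, hφH b hb]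
        exact ΦH_adj.mpr (g.map_rel_iff.mpr (hU : (U.induce SH).Adj ⟨a, ha⟩ ⟨b, hb⟩))
  let e : U ≃g corona (glue T₁ T₂ v₁ v₂) (glueP T₁ T₂ v₁ v₂ P₁ P₂) :=
    { Equiv.ofBijective φ ⟨hφinj, hφsurj⟩ with
      map_rel_iff' := fun {a b} => hmap a b }
  have htree : (glue T₁ T₂ v₁ v₂).IsTree := glue_isTree hT₁ hT₂
  let n : ℕ := Fintype.card (GlueV (Fin n₁) v₂)
  let eq1 : GlueV (Fin n₁) v₂ ≃ Fin n := Fintype.equivFin _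
  let Tn : SimpleGraph (Fin n) := SimpleGraph.comap (⇑eq1.symm) (glue T₁ T₂ v₁ v₂)
  let ψ : glue T₁ T₂ v₁ v₂ ≃g Tn :=
    { toEquiv := eq1
      map_rel_iff' := by
        intro a b
        show (glue T₁ T₂ v₁ v₂).Adj (eq1.symm (eq1 a)) (eq1.symm (eq1 b)) ↔ _
        rw [Equiv.symm_apply_apply, Equiv.symm_apply_apply] }
  exact ⟨n, Tn, (glueP T₁ T₂ v₁ v₂ P₁ P₂).pmap ψ, isTree_map ψ htree,
    ⟨e.trans (coronaCongr ψ (glueP T₁ T₂ v₁ v₂ P₁ P₂))⟩⟩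

end GenCorona
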